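/- arXiv:1102.5449 — 5 statements merged into one kernel-verified Lean document; each statement's English description precedes it below -/
import Mathlib

section
/- Let φ ⊆ A × B be a uniform relation and f : A → B a function with (a, f(a)) ∈ φ for all a ∈ A. Then for all a ∈ A and b ∈ B, (a,b) ∈ φ if and only if (f(a), b) ∈ E_B^φ. -/
def RComp {α β γ : Type*} (r : α → β → Prop) (s : β → γ → Prop) : α → γ → Prop :=
  fun a c => ∃ b, r a b ∧ s b c

def RInv {α β : Type*} (r : α → β → Prop) : β → α → Prop := fun b a => r a b

def Ker {α β : Type*} (φ : α → β → Prop) : α → α → Prop :=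
  fun a₁ a₂ => ∀ b, φ a₁ b ↔ φ a₂ b

def CoKer {α β : Type*} (φ : α → β → Prop) : β → β → Prop :=
  fun b₁ b₂ => ∀ a, φ a b₁ ↔ φ a b₂

def RComplete {α β : Type*} (φ : α → β → Prop) : Prop := ∀ a, ∃ b, φ a b

def RSurjective {α β : Type*} (φ : α → β → Prop) : Prop := ∀ b, ∃ a, φ a b

def PartialUniform {α β : Type*} (φ : α → β → Prop) : Prop :=
  ∀ a b, RComp (RComp φ (RInv φ)) φ a b → φ a b

def Uniform {α β : Type*} (φ : α → β → Prop) : Prop :=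
  RComplete φ ∧ RSurjective φ ∧ PartialUniform φ

/-- For a uniform relation φ and a functional description f of φ:
(a,b) ∈ φ iff (f(a),b) ∈ E_B^φ. -/
theorem stmt5 {A B : Type*} [Nonempty A] [Nonempty B] (φ : A → B → Prop)
    (hφ : Uniform φ) (f : A → B) (hf : ∀ a, φ a (f a)) :
    ∀ a b, φ a b ↔ CoKer φ (f a) b := by
  obtain ⟨-, -, hpu⟩ := hφ
  intro a b
  constructor
  · intro hab a'
    constructor
    · intro h1
      exact hpu a' b ⟨a, ⟨f a, h1, hf a⟩, hab⟩
    · intro h1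
      exact hpu a' (f a) ⟨a, ⟨b, h1, hab⟩, hf a⟩
  · intro h
    exact (h a).mp (hf a)
end

section
/- Given non-empty sets A, B, an equivalence E on A and an equivalence F on B, there exists a uniform relation φ ⊆ A × B with E_A^φ = E and E_B^φ = F if and only if there exists a bijection between the quotient sets A/E and B/F. -/
/-- There is a uniform relation with kernel E and cokernel F iff the quotients
A/E and B/F are in bijection. -/
theorem stmt6 {A B : Type*} [Nonempty A] [Nonempty B]
    (E : A → A → Prop) (F : B → B → Prop) (hE : Equivalence E) (hF : Equivalence F) :
    (∃ φ : A → B → Prop, Uniform φ ∧ (∀ a₁ a₂, Ker φ a₁ a₂ ↔ E a₁ a₂) ∧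
      (∀ b₁ b₂, CoKer φ b₁ b₂ ↔ F b₁ b₂)) ↔
    Nonempty (Quotient (⟨E, hE⟩ : Setoid A) ≃ Quotient (⟨F, hF⟩ : Setoid B)) := by

  classical
  constructor
  · rintro ⟨φ, ⟨hcomp, hsurj, huni⟩, hker, hcoker⟩
    have coker : ∀ a b b', φ a b → φ a b' → F b b' := by
      intro a b b' h1 h2
      apply (hcoker b b').mp
      intro a'
      constructor
      · intro h; exact huni a' b' ⟨a, ⟨b, h, h1⟩, h2⟩
      · intro h; exact huni a' b ⟨a, ⟨b', h, h2⟩, h1⟩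
    have ker : ∀ a a' b, φ a b → φ a' b → E a a' := by
      intro a a' b h1 h2
      apply (hker a a').mp
      intro b'
      constructor
      · intro h; exact huni a' b' ⟨a, ⟨b, h2, h1⟩, h⟩
      · intro h; exact huni a b' ⟨a', ⟨b, h1, h2⟩, h⟩
    have hφE : ∀ a a' b, E a a' → φ a b → φ a' b := by
      intro a a' b he h
      exact ((hker a a').mpr he b).mp h
    have hφF : ∀ a b b', F b b' → φ a b → φ a b' := by
      intro a b b' hf h
      exact ((hcoker b b').mpr hf a).mp h
    refine ⟨⟨Quotient.lift (fun a => Quotient.mk (⟨F, hF⟩ : Setoid B)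
        (Classical.choose (hcomp a))) ?_,
      Quotient.lift (fun b => Quotient.mk (⟨E, hE⟩ : Setoid A)
        (Classical.choose (hsurj b))) ?_, ?_, ?_⟩⟩
    · intro a a' he
      apply Quotient.sound
      exact coker a' (Classical.choose (hcomp a)) (Classical.choose (hcomp a'))
        (hφE a a' _ he (Classical.choose_spec (hcomp a))) (Classical.choose_spec (hcomp a'))
    · intro b b' hf
      apply Quotient.sound
      exact ker (Classical.choose (hsurj b)) (Classical.choose (hsurj b')) b'
        (hφF _ b b' hf (Classical.choose_spec (hsurj b))) (Classical.choose_spec (hsurj b'))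
    · refine Quotient.ind (fun a => ?_)
      apply Quotient.sound
      exact ker (Classical.choose (hsurj (Classical.choose (hcomp a)))) a _
        (Classical.choose_spec (hsurj (Classical.choose (hcomp a))))
        (Classical.choose_spec (hcomp a))
    · refine Quotient.ind (fun b => ?_)
      apply Quotient.sound
      exact coker (Classical.choose (hsurj b)) _ b
        (Classical.choose_spec (hcomp (Classical.choose (hsurj b))))
        (Classical.choose_spec (hsurj b))
  · rintro ⟨e⟩
    refine ⟨fun a b => e (Quotient.mk _ a) = Quotient.mk _ b, ⟨?_, ?_, ?_⟩, ?_, ?_⟩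
    · intro a
      obtain ⟨b, hb⟩ := Quotient.exists_rep (e (Quotient.mk _ a))
      exact ⟨b, hb.symm⟩
    · intro b
      obtain ⟨a, ha⟩ := Quotient.exists_rep (e.symm (Quotient.mk _ b))
      exact ⟨a, show e (Quotient.mk _ a) = _ by rw [ha, Equiv.apply_symm_apply]⟩
    · rintro a b ⟨x, ⟨y, h1, h2⟩, h3⟩
      rw [h1, ← h2, h3]
    · intro a₁ a₂
      constructor
      · intro h
        obtain ⟨b, hb⟩ := Quotient.exists_rep (e (Quotient.mk _ a₁))
        have h2 : e (Quotient.mk _ a₂) = Quotient.mk _ b := (h b).mp hb.symm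
        have : (Quotient.mk (⟨E, hE⟩ : Setoid A) a₁) = Quotient.mk _ a₂ :=
          e.injective (by rw [h2, hb])
        exact Quotient.exact this
      · intro he b
        have : (Quotient.mk (⟨E, hE⟩ : Setoid A) a₁) = Quotient.mk _ a₂ :=
          Quotient.sound he
        show e (Quotient.mk _ a₁) = _ ↔ e (Quotient.mk _ a₂) = _
        rw [this]
    · intro b₁ b₂
      constructor
      · intro h
        obtain ⟨a, ha⟩ := Quotient.exists_rep (e.symm (Quotient.mk _ b₁))
        have h1 : e (Quotient.mk _ a) = Quotient.mk _ b₁ := by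
          rw [ha, Equiv.apply_symm_apply]
        have h2 := (h a).mp h1
        exact Quotient.exact (h1.symm.trans h2)
      · intro hf a
        have : (Quotient.mk (⟨F, hF⟩ : Setoid B) b₁) = Quotient.mk _ b₂ :=
          Quotient.sound hf
        show e (Quotient.mk _ a) = Quotient.mk _ b₁ ↔ e (Quotient.mk _ a) = Quotient.mk _ b₂
        rw [this]
end

section
/- If there exists at least one forward bisimulation between automata A and B, then there exists a greatest forward bisimulation between A and B, and this greatest forward bisimulation φ satisfies φ ∘ φ⁻¹ ∘ φ ⊆ φ (it is a partial uniform relation). -/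
def SComp {α β : Type*} (s : Set α) (r : α → β → Prop) : Set β := {b | ∃ a ∈ s, r a b}

def CompS {α β : Type*} (r : α → β → Prop) (t : Set β) : Set α := {a | ∃ b, r a b ∧ b ∈ t}

/-- A nondeterministic automaton over alphabet X with state set S. -/
structure NA (X S : Type*) where
  delta : X → S → S → Prop
  init : Set S
  term : Set S

/-- φ is a forward simulation from A to B. -/
def FwdSim {X S T : Type*} (A : NA X S) (B : NA X T) (φ : S → T → Prop) : Prop :=
  (∃ a b, φ a b) ∧
  A.init ⊆ SComp B.init (RInv φ) ∧
  (∀ x b a, RComp (RInv φ) (A.delta x) b a → RComp (B.delta x) (RInv φ) b a) ∧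
  CompS (RInv φ) A.term ⊆ B.term

/-- φ is a backward simulation from A to B. -/
def BwdSim {X S T : Type*} (A : NA X S) (B : NA X T) (φ : S → T → Prop) : Prop :=
  (∃ a b, φ a b) ∧
  SComp A.init φ ⊆ B.init ∧
  (∀ x a b, RComp (A.delta x) φ a b → RComp φ (B.delta x) a b) ∧
  A.term ⊆ CompS φ B.term

/-- φ is a forward bisimulation: both φ and φ⁻¹ are forward simulations. -/
def FwdBisim {X S T : Type*} (A : NA X S) (B : NA X T) (φ : S → T → Prop) : Prop :=
  FwdSim A B φ ∧ FwdSim B A (RInv φ)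

/-- φ is a backward bisimulation: both φ and φ⁻¹ are backward simulations. -/
def BwdBisim {X S T : Type*} (A : NA X S) (B : NA X T) (φ : S → T → Prop) : Prop :=
  BwdSim A B φ ∧ BwdSim B A (RInv φ)

section Aux
variable {X S T : Type*} {A : NA X S} {B : NA X T} {φ : S → T → Prop}

lemma bisim_stepF (h : FwdBisim A B φ) {x a a' b} (hab : φ a b)
    (hd : A.delta x a a') : ∃ b', B.delta x b b' ∧ φ a' b' := by
  obtain ⟨⟨-, -, h3, -⟩, -⟩ := h
  exact h3 x b a' ⟨a, hab, hd⟩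

lemma bisim_stepB (h : FwdBisim A B φ) {x a b b'} (hab : φ a b)
    (hd : B.delta x b b') : ∃ a', A.delta x a a' ∧ φ a' b' := by
  obtain ⟨-, -, -, h3, -⟩ := h
  exact h3 x a b' ⟨b, hab, hd⟩

lemma bisim_initF (h : FwdBisim A B φ) {a} (ha : a ∈ A.init) :
    ∃ b ∈ B.init, φ a b := (h.1.2.1 ha)

lemma bisim_initB (h : FwdBisim A B φ) {b} (hb : b ∈ B.init) :
    ∃ a ∈ A.init, φ a b := (h.2.2.1 hb)

lemma bisim_termF (h : FwdBisim A B φ) {a b} (hab : φ a b) (ha : a ∈ A.term) :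
    b ∈ B.term := h.1.2.2.2 ⟨a, hab, ha⟩

lemma bisim_termB (h : FwdBisim A B φ) {a b} (hab : φ a b) (hb : b ∈ B.term) :
    a ∈ A.term := h.2.2.2.2 ⟨b, hab, hb⟩

end Aux

/-- If some forward bisimulation between A and B exists, then there is a
greatest one, and it is a partial uniform relation. -/
theorem stmt13 {X S T : Type*} (A : NA X S) (B : NA X T)
    (h : ∃ φ : S → T → Prop, FwdBisim A B φ) :
    ∃ φ : S → T → Prop, FwdBisim A B φ ∧
      (∀ ψ : S → T → Prop, FwdBisim A B ψ → ∀ a b, ψ a b → φ a b) ∧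
      (∀ a b, RComp (RComp φ (RInv φ)) φ a b → φ a b) := by
  obtain ⟨φ₀, hφ₀⟩ := h
  set Φ : S → T → Prop := fun a b => ∃ ψ, FwdBisim A B ψ ∧ ψ a b with hΦ
  -- any bisimulation-like relation containing chains is a bisim if it satisfies conditions
  have bisim_of : ∀ ψ : S → T → Prop, (∃ a b, ψ a b) →
      (∀ a ∈ A.init, ∃ b ∈ B.init, ψ a b) →
      (∀ b ∈ B.init, ∃ a ∈ A.init, ψ a b) →
      (∀ x a a' b, ψ a b → A.delta x a a' → ∃ b', B.delta x b b' ∧ ψ a' b') →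
      (∀ x a b b', ψ a b → B.delta x b b' → ∃ a', A.delta x a a' ∧ ψ a' b') →
      (∀ a b, ψ a b → a ∈ A.term → b ∈ B.term) →
      (∀ a b, ψ a b → b ∈ B.term → a ∈ A.term) →
      FwdBisim A B ψ := by
    intro ψ hne hi1 hi2 hs1 hs2 ht1 ht2
    refine ⟨⟨hne, ?_, ?_, ?_⟩, ⟨?_, ?_, ?_, ?_⟩⟩
    · intro a ha; obtain ⟨b, hb, hab⟩ := hi1 a ha; exact ⟨b, hb, hab⟩
    · rintro x b a' ⟨a, hab, hd⟩; exact hs1 x a a' b hab hd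
    · rintro b ⟨a, hab, ha⟩; exact ht1 a b hab ha
    · obtain ⟨a, b, hab⟩ := hne; exact ⟨b, a, hab⟩
    · intro b hb; obtain ⟨a, ha, hab⟩ := hi2 b hb; exact ⟨a, ha, hab⟩
    · rintro x a b' ⟨b, hab, hd⟩; exact hs2 x a b b' hab hd
    · rintro a ⟨b, hab, hb⟩; exact ht2 a b hab hb
  have hΦbisim : FwdBisim A B Φ := by
    apply bisim_of
    · obtain ⟨a, b, hab⟩ := hφ₀.1.1; exact ⟨a, b, φ₀, hφ₀, hab⟩
    · intro a ha
      obtain ⟨b, hb, hab⟩ := bisim_initF hφ₀ ha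
      exact ⟨b, hb, φ₀, hφ₀, hab⟩
    · intro b hb
      obtain ⟨a, ha, hab⟩ := bisim_initB hφ₀ hb
      exact ⟨a, ha, φ₀, hφ₀, hab⟩
    · rintro x a a' b ⟨ψ, hψ, hab⟩ hd
      obtain ⟨b', hd', hab'⟩ := bisim_stepF hψ hab hd
      exact ⟨b', hd', ψ, hψ, hab'⟩
    · rintro x a b b' ⟨ψ, hψ, hab⟩ hd
      obtain ⟨a', hd', hab'⟩ := bisim_stepB hψ hab hd
      exact ⟨a', hd', ψ, hψ, hab'⟩
    · rintro a b ⟨ψ, hψ, hab⟩ ha; exact bisim_termF hψ hab ha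
    · rintro a b ⟨ψ, hψ, hab⟩ hb; exact bisim_termB hψ hab hb
  have hGreatest : ∀ ψ : S → T → Prop, FwdBisim A B ψ → ∀ a b, ψ a b → Φ a b :=
    fun ψ hψ a b hab => ⟨ψ, hψ, hab⟩
  -- Now the composite relation
  set Ψ : S → T → Prop := fun a b => Φ a b ∨ RComp (RComp Φ (RInv Φ)) Φ a b with hΨ
  have chain : ∀ {a b}, RComp (RComp Φ (RInv Φ)) Φ a b →
      ∃ b1 c, Φ a b1 ∧ Φ c b1 ∧ Φ c b := by
    rintro a b ⟨c, ⟨b1, h1, h2⟩, h3⟩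
    exact ⟨b1, c, h1, h2, h3⟩
  have hΨbisim : FwdBisim A B Ψ := by
    apply bisim_of
    · obtain ⟨a, b, hab⟩ := hΦbisim.1.1; exact ⟨a, b, Or.inl hab⟩
    · intro a ha
      obtain ⟨b, hb, hab⟩ := bisim_initF hΦbisim ha
      exact ⟨b, hb, Or.inl hab⟩
    · intro b hb
      obtain ⟨a, ha, hab⟩ := bisim_initB hΦbisim hb
      exact ⟨a, ha, Or.inl hab⟩
    · rintro x a a' b (hab | hcomp) hd
      · obtain ⟨b', hd', hab'⟩ := bisim_stepF hΦbisim hab hd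
        exact ⟨b', hd', Or.inl hab'⟩
      · obtain ⟨b1, c, h1, h2, h3⟩ := chain hcomp
        obtain ⟨b1', hdb1, h1'⟩ := bisim_stepF hΦbisim h1 hd
        obtain ⟨c', hdc, h2'⟩ := bisim_stepB hΦbisim h2 hdb1
        obtain ⟨b', hdb, h3'⟩ := bisim_stepF hΦbisim h3 hdc
        exact ⟨b', hdb, Or.inr ⟨c', ⟨b1', h1', h2'⟩, h3'⟩⟩
    · rintro x a b b' (hab | hcomp) hd
      · obtain ⟨a', hd', hab'⟩ := bisim_stepB hΦbisim hab hd
        exact ⟨a', hd', Or.inl hab'⟩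
      · obtain ⟨b1, c, h1, h2, h3⟩ := chain hcomp
        obtain ⟨c', hdc, h3'⟩ := bisim_stepB hΦbisim h3 hd
        obtain ⟨b1', hdb1, h2'⟩ := bisim_stepF hΦbisim h2 hdc
        obtain ⟨a', hda, h1'⟩ := bisim_stepB hΦbisim h1 hdb1
        exact ⟨a', hda, Or.inr ⟨c', ⟨b1', h1', h2'⟩, h3'⟩⟩
    · rintro a b (hab | hcomp) ha
      · exact bisim_termF hΦbisim hab ha
      · obtain ⟨b1, c, h1, h2, h3⟩ := chain hcomp
        exact bisim_termF hΦbisim h3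
          (bisim_termB hΦbisim h2 (bisim_termF hΦbisim h1 ha))
    · rintro a b (hab | hcomp) hb
      · exact bisim_termB hΦbisim hab hb
      · obtain ⟨b1, c, h1, h2, h3⟩ := chain hcomp
        exact bisim_termB hΦbisim h1
          (bisim_termF hΦbisim h2 (bisim_termB hΦbisim h3 hb))
  refine ⟨Φ, hΦbisim, hGreatest, ?_⟩
  intro a b hcomp
  exact hGreatest Ψ hΨbisim a b (Or.inr hcomp)
end

section
/- Let A be an automaton with states A, let E be an equivalence on A, and let φ_E ⊆ A × (A/E) be the graph of the natural quotient map a ↦ E_a. Then φ_E is both a forward simulation and a backward simulation from A to the factor automaton A/E; moreover, φ_E is a forward bisimulation if and only if E is a forward bisimulation on A. -/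
/-- The factor automaton of A with respect to a setoid s on its states. -/
def factor {X S : Type*} (A : NA X S) (s : Setoid S) : NA X (Quotient s) where
  delta x q₁ q₂ := ∃ a₁ a₂, Quotient.mk s a₁ = q₁ ∧ Quotient.mk s a₂ = q₂ ∧
    ∃ a₁' a₂', s.r a₁ a₁' ∧ A.delta x a₁' a₂' ∧ s.r a₂' a₂
  init := {q | ∃ a, Quotient.mk s a = q ∧ ∃ a', a' ∈ A.init ∧ s.r a' a}
  term := {q | ∃ a, Quotient.mk s a = q ∧ ∃ a', s.r a a' ∧ a' ∈ A.term}

/-- The graph of the natural map onto the factor automaton is both a forward and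
a backward simulation, and it is a forward bisimulation iff E is a forward
bisimulation on A. -/
theorem stmt17 {X S : Type*} [Nonempty S] (A : NA X S) (E : S → S → Prop)
    (hE : Equivalence E) :
    FwdSim A (factor A ⟨E, hE⟩) (fun a q => Quotient.mk ⟨E, hE⟩ a = q) ∧
    BwdSim A (factor A ⟨E, hE⟩) (fun a q => Quotient.mk ⟨E, hE⟩ a = q) ∧
    (FwdBisim A (factor A ⟨E, hE⟩) (fun a q => Quotient.mk ⟨E, hE⟩ a = q) ↔
      ((∀ x a b, RComp E (A.delta x) a b → RComp (A.delta x) E a b) ∧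
       (∀ a, (∃ a', E a a' ∧ a' ∈ A.term) ↔ a ∈ A.term))) := by

  classical
  set s : Setoid S := ⟨E, hE⟩ with hs
  obtain ⟨a0⟩ := ‹Nonempty S›
  have hfwd : FwdSim A (factor A s) (fun a q => Quotient.mk s a = q) := by
    refine ⟨⟨a0, Quotient.mk s a0, rfl⟩, ?_, ?_, ?_⟩
    · intro a ha
      exact ⟨Quotient.mk s a, ⟨a, rfl, a, ha, hE.refl a⟩, rfl⟩
    · rintro x q a ⟨a₁, rfl, hd⟩
      exact ⟨Quotient.mk s a, ⟨a₁, a, rfl, rfl, a₁, a, hE.refl a₁, hd, hE.refl a⟩, rfl⟩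
    · rintro q ⟨a, rfl, ha⟩
      exact ⟨a, rfl, a, hE.refl a, ha⟩
  refine ⟨hfwd, ?_, ?_⟩
  · refine ⟨⟨a0, Quotient.mk s a0, rfl⟩, ?_, ?_, ?_⟩
    · rintro q ⟨a, ha, rfl⟩
      exact ⟨a, rfl, a, ha, hE.refl a⟩
    · rintro x a q ⟨b, hd, rfl⟩
      exact ⟨Quotient.mk s a, rfl, a, b, rfl, rfl, a, b, hE.refl a, hd, hE.refl b⟩
    · intro a ha
      exact ⟨Quotient.mk s a, rfl, a, rfl, a, hE.refl a, ha⟩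
  · constructor
    · rintro ⟨-, -, hinit, hdelta, hterm⟩
      constructor
      · rintro x a b ⟨a', hEaa', hd⟩
        obtain ⟨c, hc, hcb⟩ := hdelta x a (Quotient.mk s b)
          ⟨Quotient.mk s a, rfl, a, b, rfl, rfl, a', b, hEaa', hd, hE.refl b⟩
        exact ⟨c, hc, Quotient.exact hcb⟩
      · intro a
        constructor
        · rintro ⟨a', hEaa', ha'⟩
          exact hterm ⟨Quotient.mk s a, rfl, a, rfl, a', hEaa', ha'⟩
        · intro ha
          exact ⟨a, hE.refl a, ha⟩
    · rintro ⟨hd, ht⟩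
      refine ⟨hfwd, ⟨Quotient.mk s a0, a0, rfl⟩, ?_, ?_, ?_⟩
      · rintro q ⟨a, rfl, a', ha', hEa'a⟩
        exact ⟨a', ha', Quotient.sound hEa'a⟩
      · rintro x a q ⟨q₁, (hq₁ : Quotient.mk s a = q₁), hdel⟩
        subst hq₁
        obtain ⟨a₁, a₂, h1, h2, a₁', a₂', hE1, hd', hE2⟩ := hdel
        obtain ⟨c, hc, hEc⟩ := hd x a a₂'
          ⟨a₁', hE.trans (hE.symm (Quotient.exact h1)) hE1, hd'⟩
        exact ⟨c, hc, h2 ▸ (Quotient.sound (hE.trans hEc hE2) : Quotient.mk s c = _)⟩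
      · rintro a ⟨q, (hq : Quotient.mk s a = q), a₀, h0, a', hE0, ha'⟩
        subst hq
        exact (ht a).1 ⟨a', hE.trans (hE.symm (Quotient.exact h0)) hE0, ha'⟩
end

section
/- Let A be an automaton. The set of weak forward bisimulation equivalences on A (equivalences E with E ∘ τ_u ⊆ τ_u for every word u) is exactly the principal ideal (down-set) of the lattice of equivalences on A generated by the equivalence E^wfb defined by (a,a') ∈ E^wfb iff for every word u, a ∈ τ_u ↔ a' ∈ τ_u. In particular E^wfb itself is a weak forward bisimulation equivalence, and an equivalence E satisfies E ∘ τ_u ⊆ τ_u for all u iff E ⊆ E^wfb. -/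
/-- τ_u: the set of states from which the word u leads to a terminal state. -/
def tauW {X S : Type*} (A : NA X S) : List X → Set S
  | [] => A.term
  | x :: u => {a | ∃ b, A.delta x a b ∧ b ∈ tauW A u}

/-- The greatest weak forward bisimulation equivalence on A. -/
def Ewfb {X S : Type*} (A : NA X S) : S → S → Prop :=
  fun a a' => ∀ u : List X, a ∈ tauW A u ↔ a' ∈ tauW A u

/-- The weak forward bisimulation equivalences on A form exactly the principal
down-set of the lattice of equivalences generated by E^wfb. -/
theorem stmt19 {X S : Type*} (A : NA X S) :
    Equivalence (Ewfb A) ∧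
    (∀ u : List X, {a | ∃ a', Ewfb A a a' ∧ a' ∈ tauW A u} ⊆ tauW A u) ∧
    (∀ E : S → S → Prop, Equivalence E →
      ((∀ u : List X, {a | ∃ a', E a a' ∧ a' ∈ tauW A u} ⊆ tauW A u) ↔
        (∀ a a', E a a' → Ewfb A a a'))) := by
  refine ⟨⟨fun a u => Iff.rfl, fun h u => (h u).symm, fun h1 h2 u => (h1 u).trans (h2 u)⟩, ?_, ?_⟩
  · intro u a ⟨a', h, ha'⟩
    exact (h u).mpr ha'
  · intro E hE
    constructor
    · intro h a a' hE' u
      constructor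
      · intro ha
        exact h u ⟨a, hE.symm hE', ha⟩
      · intro ha'
        exact h u ⟨a', hE', ha'⟩
    · intro h u a ⟨a', hE', ha'⟩
      exact (h a a' hE' u).mpr ha'
end
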